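/- arXiv:2605.26661 — 2 statements merged into one kernel-verified Lean document; each statement's English description precedes it below -/
import Mathlib

section
/- Let z₁,…,z_N ∈ ℝ^d, κ > 0, and suppose W* = (w*₁,…,w*_M) with each ‖w*_y‖₂ = 1 is a KKT point of the constrained minimization of the softmax cross-entropy loss ℒ(W) = −Σᵢ log( exp(⟨z_i, w_{ŷ_i}⟩/κ)/Σ_y exp(⟨z_i, w_y⟩/κ) ) subject to ‖w_y‖₂ = 1 for all y. If the vector v_y = Σ_{i: ŷ_i=y}(1−π_{iy}) z_i − Σ_{i: ŷ_i≠y} π_{iy} z_i is nonzero (with π_{iy} the softmax probabilities at W*), then w*_y = ± v_y/‖v_y‖₂; in particular w*_y lies in span{z₁,…,z_N}. -/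
set_option maxHeartbeats 1000000


open RealInnerProductSpace

/-- Theorem 1 of the paper: if `W*` (with unit-norm columns) is a KKT point of the
minimization of the softmax cross-entropy loss subject to `‖w_y‖ = 1` (i.e., there
exist multipliers `μ_y` with `∇_{w_y} L(W*) + 2 μ_y w*_y = 0`), and the vector
`v_y = Σ_{i : ŷ_i = y}(1 − π_{iy}) z_i − Σ_{i : ŷ_i ≠ y} π_{iy} z_i` is nonzero,
then `w*_y = ± v_y/‖v_y‖`; in particular `w*_y ∈ span{z_1,…,z_N}`. -/
theorem stmt_15 (d N M : ℕ) (κ : ℝ) (hκ : 0 < κ)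
    (z : Fin N → EuclideanSpace ℝ (Fin d)) (yhat : Fin N → Fin M)
    (L : (Fin M → EuclideanSpace ℝ (Fin d)) → ℝ)
    (hL : ∀ W, L W = -∑ i, Real.log (Real.exp (⟪z i, W (yhat i)⟫ / κ) /
        ∑ y, Real.exp (⟪z i, W y⟫ / κ)))
    (Wstar : Fin M → EuclideanSpace ℝ (Fin d))
    (hnorm : ∀ y, ‖Wstar y‖ = 1)
    (π : Fin N → Fin M → ℝ)
    (hπ : ∀ i y', π i y' = Real.exp (⟪z i, Wstar y'⟫ / κ) /
        ∑ y'', Real.exp (⟪z i, Wstar y''⟫ / κ))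
    (μ : Fin M → ℝ)
    (hKKT : ∀ y, ∀ G, HasGradientAt (fun v => L (Function.update Wstar y v)) G (Wstar y) →
        G + (2 * μ y) • Wstar y = 0)
    (y : Fin M)
    (v : EuclideanSpace ℝ (Fin d))
    (hv : v = (∑ i ∈ Finset.univ.filter fun i => yhat i = y, (1 - π i y) • z i) -
        ∑ i ∈ Finset.univ.filter fun i => yhat i ≠ y, π i y • z i)
    (hvne : v ≠ 0) :
    (Wstar y = ‖v‖⁻¹ • v ∨ Wstar y = -(‖v‖⁻¹ • v)) ∧
      Wstar y ∈ Submodule.span ℝ (Set.range z) := by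
  have hκ' : κ ≠ 0 := ne_of_gt hκ
  have hSpos : ∀ i : Fin N, (0:ℝ) < ∑ y'', Real.exp (⟪z i, Wstar y''⟫ / κ) := by
    intro i
    exact Finset.sum_pos (fun j _ => Real.exp_pos _) ⟨y, Finset.mem_univ y⟩
  have hrepr : ∀ w, L (Function.update Wstar y w) =
      ∑ i, (Real.log (∑ y'', Real.exp (⟪z i, Function.update Wstar y w y''⟫ / κ))
        - ⟪z i, Function.update Wstar y w (yhat i)⟫ / κ) := by
    intro w
    rw [hL, ← Finset.sum_neg_distrib]
    refine Finset.sum_congr rfl fun i _ => ?_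
    have hS : (0:ℝ) < ∑ y'', Real.exp (⟪z i, Function.update Wstar y w y''⟫ / κ) :=
      Finset.sum_pos (fun j _ => Real.exp_pos _) ⟨y, Finset.mem_univ y⟩
    rw [Real.log_div (Real.exp_ne_zero _) (ne_of_gt hS), Real.log_exp]
    ring
  have hlin0 : ∀ i : Fin N, HasFDerivAt (fun w : EuclideanSpace ℝ (Fin d) => ⟪z i, w⟫ / κ)
      (κ⁻¹ • innerSL ℝ (z i)) (Wstar y) := by
    intro i
    have h := (κ⁻¹ • innerSL ℝ (z i)).hasFDerivAt (x := Wstar y)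
    have heq : ⇑(κ⁻¹ • innerSL ℝ (z i)) = fun w : EuclideanSpace ℝ (Fin d) => ⟪z i, w⟫ / κ := by
      funext w; simp [div_eq_inv_mul]
    rwa [heq] at h
  have hF : ∀ (i : Fin N) (y'' : Fin M),
      HasFDerivAt (fun w => Real.exp (⟪z i, Function.update Wstar y w y''⟫ / κ))
        (if y'' = y then (Real.exp (⟪z i, Wstar y⟫ / κ) / κ) • (innerSL ℝ (z i)) else 0)
        (Wstar y) := by
    intro i y''
    by_cases h : y'' = y
    · rw [if_pos h, h]
      simp only [Function.update_self]
      have := (hlin0 i).exp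
      simpa [smul_smul, div_eq_mul_inv, mul_comm] using this
    · simp only [Function.update_of_ne h, if_neg h]
      exact hasFDerivAt_const _ _
  have hG : ∀ i : Fin N,
      HasFDerivAt (fun w => Real.log (∑ y'', Real.exp (⟪z i, Function.update Wstar y w y''⟫ / κ))
        - ⟪z i, Function.update Wstar y w (yhat i)⟫ / κ)
        ((π i y / κ) • innerSL ℝ (z i)
          - (if yhat i = y then κ⁻¹ • innerSL ℝ (z i) else 0)) (Wstar y) := by
    intro i
    have hsum : HasFDerivAt (fun w => ∑ y'', Real.exp (⟪z i, Function.update Wstar y w y''⟫ / κ))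
        ((Real.exp (⟪z i, Wstar y⟫ / κ) / κ) • (innerSL ℝ (z i))) (Wstar y) := by
      have h := HasFDerivAt.fun_sum (fun y'' (_ : y'' ∈ Finset.univ) => hF i y'')
      have : (∑ y'' : Fin M, if y'' = y then (Real.exp (⟪z i, Wstar y⟫ / κ) / κ) •
          (innerSL ℝ (z i)) else 0)
          = (Real.exp (⟪z i, Wstar y⟫ / κ) / κ) • (innerSL ℝ (z i)) := by
        rw [Finset.sum_ite_eq' Finset.univ y]
        simp
      rwa [this] at h
    have hne : (fun w => ∑ y'', Real.exp (⟪z i, Function.update Wstar y w y''⟫ / κ)) (Wstar y)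
        ≠ 0 := by
      simp only [Function.update_eq_self]
      exact ne_of_gt (hSpos i)
    have hlog := hsum.log hne
    have hlin : HasFDerivAt (fun w => ⟪z i, Function.update Wstar y w (yhat i)⟫ / κ)
        (if yhat i = y then κ⁻¹ • innerSL ℝ (z i) else 0) (Wstar y) := by
      by_cases h : yhat i = y
      · rw [if_pos h, h]
        simp only [Function.update_self]
        exact hlin0 i
      · rw [if_neg h]
        simp only [Function.update_of_ne h]
        exact hasFDerivAt_const _ _
    have hfin := hlog.sub hlin
    have heq : ((fun w => ∑ y'', Real.exp (⟪z i, Function.update Wstar y w y''⟫ / κ))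
          (Wstar y))⁻¹ • ((Real.exp (⟪z i, Wstar y⟫ / κ) / κ) • (innerSL ℝ (z i)))
        = (π i y / κ) • innerSL ℝ (z i) := by
      have hval : (fun w => ∑ y'', Real.exp (⟪z i, Function.update Wstar y w y''⟫ / κ))
          (Wstar y) = ∑ y'', Real.exp (⟪z i, Wstar y''⟫ / κ) := by
        simp only [Function.update_eq_self]
      rw [hval, smul_smul]
      congr 1
      rw [hπ i y]
      have := ne_of_gt (hSpos i)
      field_simp
    rwa [heq] at hfin
  have htot : HasFDerivAt (fun w => L (Function.update Wstar y w))
      (∑ i, ((π i y / κ) • innerSL ℝ (z i)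
        - (if yhat i = y then κ⁻¹ • innerSL ℝ (z i) else 0))) (Wstar y) := by
    have h := HasFDerivAt.fun_sum (fun i (_ : i ∈ Finset.univ) => hG i)
    exact h.congr_of_eventuallyEq (Filter.Eventually.of_forall fun w => (hrepr w))
  have hgrad : HasGradientAt (fun w => L (Function.update Wstar y w)) (-(κ⁻¹) • v) (Wstar y) := by
    rw [hasGradientAt_iff_hasFDerivAt]
    have hD : (InnerProductSpace.toDual ℝ (EuclideanSpace ℝ (Fin d))) (-(κ⁻¹) • v)
        = (∑ i, ((π i y / κ) • innerSL ℝ (z i)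
          - (if yhat i = y then κ⁻¹ • innerSL ℝ (z i) else 0))) := by
      apply ContinuousLinearMap.ext
      intro x
      simp only [InnerProductSpace.toDual_apply_apply, ContinuousLinearMap.sum_apply,
        ContinuousLinearMap.sub_apply, ContinuousLinearMap.smul_apply, innerSL_apply_apply,
        real_inner_smul_left, smul_eq_mul]
      rw [hv, inner_sub_left, sum_inner, sum_inner]
      simp only [real_inner_smul_left, apply_ite (fun f : EuclideanSpace ℝ (Fin d) →L[ℝ] ℝ => f x),
        ContinuousLinearMap.smul_apply, ContinuousLinearMap.zero_apply, innerSL_apply_apply, smul_eq_mul]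
      rw [Finset.sum_filter, Finset.sum_filter, ← Finset.sum_sub_distrib, Finset.mul_sum]
      refine Finset.sum_congr rfl fun i _ => ?_
      by_cases h : yhat i = y
      · simp only [h]
        simp only [if_true, ite_true, not_true, ite_false, if_neg (not_not_intro rfl)]
        ring
      · simp only [h]
        simp only [if_false, ite_false, if_pos h]
        ring
    rw [hD]
    exact htot
  have hk := hKKT y _ hgrad
  have h2μ : (2 * μ y) ≠ 0 := by
    intro h0
    rw [h0, zero_smul, add_zero] at hk
    apply hvne
    have hne : -(κ⁻¹ : ℝ) ≠ 0 := by
      simp only [ne_eq, neg_eq_zero, inv_eq_zero]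
      exact hκ'
    exact (smul_eq_zero.mp hk).resolve_left hne
  have hwv : Wstar y = ((2 * μ y)⁻¹ * κ⁻¹) • v := by
    have hB : (2 * μ y) • Wstar y = κ⁻¹ • v := by
      have h := eq_neg_of_add_eq_zero_right hk
      rw [h, neg_smul, neg_neg]
    calc Wstar y = (2 * μ y)⁻¹ • ((2 * μ y) • Wstar y) := by
          rw [smul_smul, inv_mul_cancel₀ h2μ, one_smul]
      _ = (2 * μ y)⁻¹ • (κ⁻¹ • v) := by rw [hB]
      _ = ((2 * μ y)⁻¹ * κ⁻¹) • v := by rw [smul_smul]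
  have hvnorm : ‖v‖ ≠ 0 := norm_ne_zero_iff.mpr hvne
  have habs : |(2 * μ y)⁻¹ * κ⁻¹| = ‖v‖⁻¹ := by
    have h1 : |(2 * μ y)⁻¹ * κ⁻¹| * ‖v‖ = 1 := by
      rw [← Real.norm_eq_abs, ← norm_smul, ← hwv]
      exact hnorm y
    exact eq_inv_of_mul_eq_one_left h1
  have hcases : (2 * μ y)⁻¹ * κ⁻¹ = ‖v‖⁻¹ ∨ (2 * μ y)⁻¹ * κ⁻¹ = -‖v‖⁻¹ :=
    abs_eq (by positivity) |>.mp habs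
  have hvmem : v ∈ Submodule.span ℝ (Set.range z) := by
    rw [hv]
    refine sub_mem (Submodule.sum_mem _ fun i _ => Submodule.smul_mem _ _ ?_)
      (Submodule.sum_mem _ fun i _ => Submodule.smul_mem _ _ ?_) <;>
      exact Submodule.subset_span ⟨i, rfl⟩
  constructor
  · rcases hcases with h | h
    · left; rw [hwv, h]
    · right; rw [hwv, h, neg_smul]
  · rw [hwv]
    exact Submodule.smul_mem _ _ hvmem
end

section
/- Let R = [r₁,…,r_M] and W = [w₁,…,w_M] be d×M matrices whose columns are unit vectors, with each w_j lying in a fixed linear subspace S ⊆ ℝ^d. Then ‖R − W‖_F² ≥ Σ_{j=1}^M 2(1 − ‖Proj_S(r_j)‖₂). -/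
open RealInnerProductSpace

/-- Matrix form of the modality-gap lower bound: for matrices `R = [r_1,…,r_M]` and
`W = [w_1,…,w_M]` with unit-vector columns and each `w_j ∈ S`,
`‖R − W‖_F² = Σ_j ‖r_j − w_j‖² ≥ Σ_j 2(1 − ‖Proj_S r_j‖)`. -/
theorem stmt_17 (d M : ℕ) (r w : Fin M → EuclideanSpace ℝ (Fin d))
    (S : Submodule ℝ (EuclideanSpace ℝ (Fin d)))
    (hr : ∀ j, ‖r j‖ = 1) (hw : ∀ j, ‖w j‖ = 1) (hwS : ∀ j, w j ∈ S) :
    ∑ j, 2 * (1 - ‖(S.orthogonalProjectionOnto (r j) : EuclideanSpace ℝ (Fin d))‖) ≤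
      ∑ j, ‖r j - w j‖ ^ 2 := by
  apply Finset.sum_le_sum
  intro j _
  have h1 : ‖r j - w j‖ ^ 2 = 2 - 2 * ⟪r j, w j⟫ := by
    rw [norm_sub_sq_real, hr j, hw j]; ring
  have horth : ⟪r j - (S.orthogonalProjectionOnto (r j) : EuclideanSpace ℝ (Fin d)), w j⟫ = 0 :=
    S.starProjection_inner_eq_zero (r j) (w j) (hwS j)
  have h2 : ⟪r j, w j⟫ = ⟪(S.orthogonalProjectionOnto (r j) : EuclideanSpace ℝ (Fin d)), w j⟫ := by
    have := inner_sub_left (𝕜 := ℝ) (r j)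
      ((S.orthogonalProjectionOnto (r j) : EuclideanSpace ℝ (Fin d))) (w j)
    rw [this] at horth; linarith
  have h3 : ⟪r j, w j⟫ ≤ ‖(S.orthogonalProjectionOnto (r j) : EuclideanSpace ℝ (Fin d))‖ := by
    rw [h2]
    calc _ ≤ ‖(S.orthogonalProjectionOnto (r j) : EuclideanSpace ℝ (Fin d))‖ * ‖w j‖ :=
          real_inner_le_norm _ _
      _ = _ := by rw [hw j, mul_one]
  rw [h1]; linarith
end
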